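/- Let k be a field of characteristic 2 and define φ(t) = t + t² + Σ_{j≥0} Σ_{ℓ=0}^{2^j-1} t^{6·2^j + 2ℓ} ∈ k[[t]]. The continuous k-algebra endomorphism σ of k[[t]] with σ(t) = φ(t) is an automorphism of order exactly 4; in particular σ lies in the Nottingham group (σ(t) ≡ t mod t²) and σ² ≠ id. -/

import Mathlib

open PowerSeries
noncomputable section

/-- The product (= `t`-adic) topology on `k[[t]]`, `k` being discrete. -/
def psTop (k : Type*) : TopologicalSpace (PowerSeries k) :=
  letI : TopologicalSpace k := ⊥
  inferInstanceAs (TopologicalSpace ((Unit →₀ ℕ) → k))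

variable (k : Type*) [Field k]

/-- The `t`-adically convergent double sum `Σ_{j≥0} Σ_{ℓ=0}^{2^j-1} t^{6·2^j+2ℓ}`, given
coefficientwise (the terms with `j > n` do not contribute to the coefficient of `tⁿ`). -/
def phiTail : PowerSeries k :=
  PowerSeries.mk fun n =>
    ∑ j ∈ Finset.range (n + 1), ∑ l ∈ Finset.range (2 ^ j),
      if n = 6 * 2 ^ j + 2 * l then (1 : k) else 0

/-- `φ(t) = t + t² + Σ_{j≥0} Σ_{ℓ=0}^{2^j-1} t^{6·2^j + 2ℓ}`. -/
def phiSeries : PowerSeries k := X + X ^ 2 + phiTail k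

namespace NottinghamProof

attribute [local instance] psTop
attribute [local instance] Classical.propDecidable

variable {k : Type*} [Field k]

/-! ### Substitution of a power series with zero constant term -/

/-- Substitution `f ↦ f(a)`, defined coefficientwise via truncations. -/
def sub (a f : PowerSeries k) : PowerSeries k :=
  PowerSeries.mk fun m => coeff m (Polynomial.aeval a (trunc (m + 1) f))

lemma coeff_pow_eq_zero {a : PowerSeries k} (ha : constantCoeff a = 0)
    {m n : ℕ} (h : m < n) : coeff m (a ^ n) = 0 :=
  X_pow_dvd_iff.mp (pow_dvd_pow_of_dvd (X_dvd_iff.mpr ha) n) m h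

lemma coeff_aeval_eq_zero {a : PowerSeries k} (ha : constantCoeff a = 0)
    {P : Polynomial k} {m : ℕ} (hP : ∀ i ≤ m, P.coeff i = 0) :
    coeff m (Polynomial.aeval a P) = 0 := by
  rw [Polynomial.aeval_def, Polynomial.eval₂_eq_sum, Polynomial.sum_def, map_sum]
  refine Finset.sum_eq_zero fun i hi => ?_
  rcases le_or_gt i m with h | h
  · exact absurd (hP i h) (Polynomial.mem_support_iff.mp hi)
  · rw [PowerSeries.algebraMap_apply, Algebra.algebraMap_self, RingHom.id_apply,
      coeff_C_mul, coeff_pow_eq_zero ha h, mul_zero]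

lemma coeff_sub_trunc {a : PowerSeries k} (ha : constantCoeff a = 0)
    (f : PowerSeries k) {m M : ℕ} (h : m < M) :
    coeff m (sub a f) = coeff m (Polynomial.aeval a (trunc M f)) := by
  rw [sub, coeff_mk]
  have key : coeff m (Polynomial.aeval a (trunc M f - trunc (m + 1) f)) = 0 := by
    refine coeff_aeval_eq_zero ha fun i hi => ?_
    rw [Polynomial.coeff_sub, coeff_trunc, coeff_trunc, if_pos (by omega), if_pos (by omega),
      sub_self]
  rw [map_sub, map_sub] at key
  exact (sub_eq_zero.mp key).symm

lemma sub_add (a f g : PowerSeries k) : sub a (f + g) = sub a f + sub a g := by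
  ext m
  simp [sub, coeff_mk, map_add, map_add]

lemma sub_mul {a : PowerSeries k} (ha : constantCoeff a = 0) (f g : PowerSeries k) :
    sub a (f * g) = sub a f * sub a g := by
  ext m
  have hL : coeff m (sub a (f * g)) =
      coeff m (Polynomial.aeval a (trunc (m + 1) f * trunc (m + 1) g)) := by
    rw [sub, coeff_mk]
    have key : coeff m
        (Polynomial.aeval a (trunc (m + 1) (f * g) - trunc (m + 1) f * trunc (m + 1) g)) = 0 := by
      refine coeff_aeval_eq_zero ha fun i hi => ?_
      rw [Polynomial.coeff_sub, coeff_trunc, if_pos (by omega), PowerSeries.coeff_mul,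
        Polynomial.coeff_mul, sub_eq_zero]
      refine Finset.sum_congr rfl fun p hp => ?_
      rw [Finset.HasAntidiagonal.mem_antidiagonal] at hp
      rw [coeff_trunc, coeff_trunc, if_pos (by omega), if_pos (by omega)]
    rw [map_sub, map_sub] at key
    exact sub_eq_zero.mp key
  rw [hL, map_mul, PowerSeries.coeff_mul, PowerSeries.coeff_mul]
  refine Finset.sum_congr rfl fun p hp => ?_
  rw [Finset.HasAntidiagonal.mem_antidiagonal] at hp
  rw [coeff_sub_trunc ha f (show p.1 < m + 1 by omega),
    coeff_sub_trunc ha g (show p.2 < m + 1 by omega)]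

lemma sub_one (a : PowerSeries k) : sub a 1 = 1 := by
  ext m
  rw [sub, coeff_mk, trunc_one, map_one]

lemma sub_C (a : PowerSeries k) (c : k) : sub a (C c) = C c := by
  ext m
  rw [sub, coeff_mk, trunc_C, Polynomial.aeval_C, PowerSeries.algebraMap_apply,
    Algebra.algebraMap_self, RingHom.id_apply]

lemma sub_X {a : PowerSeries k} (ha : constantCoeff a = 0) : sub a X = a := by
  ext m
  rw [sub, coeff_mk]
  rcases m with _ | m
  · have h0 : trunc 1 (X : PowerSeries k) = 0 := by
      apply Polynomial.ext
      intro i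
      rw [coeff_trunc, Polynomial.coeff_zero]
      split
      · rw [PowerSeries.coeff_X, if_neg (by omega)]
      · rfl
    rw [h0, map_zero, map_zero, coeff_zero_eq_constantCoeff_apply, ha]
  · rw [trunc_X_of (by omega), Polynomial.aeval_X]

lemma constantCoeff_sub {a f : PowerSeries k} (ha : constantCoeff a = 0)
    (hf : constantCoeff f = 0) : constantCoeff (sub a f) = 0 := by
  rw [← coeff_zero_eq_constantCoeff_apply, sub, coeff_mk]
  refine coeff_aeval_eq_zero ha fun i hi => ?_
  rw [coeff_trunc]
  split
  · have : i = 0 := by omega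
    subst this
    rw [coeff_zero_eq_constantCoeff_apply, hf]
  · rfl

/-- Substitution as a `k`-algebra homomorphism. -/
def subHom {a : PowerSeries k} (ha : constantCoeff a = 0) :
    PowerSeries k →ₐ[k] PowerSeries k where
  toFun := sub a
  map_one' := sub_one a
  map_mul' := sub_mul ha
  map_zero' := by
    have h := sub_add a 0 0
    rw [add_zero] at h
    exact left_eq_add.mp h
  map_add' := sub_add a
  commutes' := fun c => by
    rw [PowerSeries.algebraMap_apply, Algebra.algebraMap_self, RingHom.id_apply]
    exact sub_C a c

lemma subHom_apply {a : PowerSeries k} (ha : constantCoeff a = 0) (f : PowerSeries k) :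
    subHom ha f = sub a f := rfl

/-- The finite-sum formula for coefficients of a substitution. -/
lemma coeff_sub_formula {a : PowerSeries k} (ha : constantCoeff a = 0)
    (f : PowerSeries k) (m : ℕ) :
    coeff m (sub a f) = ∑ i ∈ Finset.range (m + 1), coeff i f * coeff m (a ^ i) := by
  rw [sub, coeff_mk, Polynomial.aeval_def,
    Polynomial.eval₂_eq_sum_range' (algebraMap k (PowerSeries k))
      (natDegree_trunc_lt f m) a, map_sum]
  refine Finset.sum_congr rfl fun i hi => ?_
  rw [Finset.mem_range] at hi
  rw [PowerSeries.algebraMap_apply, Algebra.algebraMap_self, RingHom.id_apply, coeff_C_mul,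
    coeff_trunc, if_pos (by omega)]

/-! ### Topology -/

section Topology

open Filter

lemma coeff_eq_apply (g : PowerSeries k) (d : Unit →₀ ℕ) : g d = coeff (d ()) g := by
  rw [coeff_def (s := d) rfl, MvPowerSeries.coeff_apply]

lemma t2 : T2Space (PowerSeries k) := by
  letI : TopologicalSpace k := ⊥
  haveI : DiscreteTopology k := ⟨rfl⟩
  exact inferInstanceAs (T2Space ((Unit →₀ ℕ) → k))

lemma continuous_sub (a : PowerSeries k) (ha : constantCoeff a = 0) :
    Continuous (sub a : PowerSeries k → PowerSeries k) := by
  letI : TopologicalSpace k := ⊥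
  haveI : DiscreteTopology k := ⟨rfl⟩
  refine continuous_pi fun d => ?_
  have hrw : (fun f : PowerSeries k => (sub a f) d) =
      (fun v : Fin (d () + 1) → k => ∑ i, v i * coeff (d ()) (a ^ (i : ℕ))) ∘
        (fun f i => coeff (i : ℕ) f) := by
    funext f
    simp only [Function.comp_apply]
    rw [coeff_eq_apply (sub a f) d, coeff_sub_formula ha,
      Finset.sum_range fun i => coeff i f * coeff (d ()) (a ^ i)]
  rw [hrw]
  exact (continuous_of_discreteTopology).comp (continuous_pi fun i => continuous_apply _)

lemma coeff_aeval_X (P : Polynomial k) (n : ℕ) :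
    coeff n (Polynomial.aeval (X : PowerSeries k) P) = P.coeff n := by
  rw [Polynomial.aeval_def, Polynomial.eval₂_eq_sum, Polynomial.sum_def, map_sum]
  rw [Finset.sum_congr rfl (fun i _ => ?_)]
  rotate_left
  · exact fun i => P.coeff i * (if n = i then 1 else 0)
  · rw [PowerSeries.algebraMap_apply, Algebra.algebraMap_self, RingHom.id_apply, coeff_C_mul,
      coeff_X_pow]
  by_cases h : n ∈ P.support
  · rw [Finset.sum_eq_single n]
    · rw [if_pos rfl, mul_one]
    · intro b _ hb; rw [if_neg (Ne.symm hb), mul_zero]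
    · intro hn; exact absurd h hn
  · rw [Finset.sum_eq_zero, (Polynomial.notMem_support_iff.mp h)]
    intro i hi
    rw [if_neg, mul_zero]
    intro hni; exact h (hni ▸ hi)

lemma tendsto_aeval_trunc (f : PowerSeries k) :
    Tendsto (fun N => Polynomial.aeval (X : PowerSeries k) (trunc N f)) atTop (nhds f) := by
  letI : TopologicalSpace k := ⊥
  haveI : DiscreteTopology k := ⟨rfl⟩
  rw [show (nhds f : Filter (PowerSeries k)) = @nhds ((Unit →₀ ℕ) → k) _ f from rfl]
  refine tendsto_pi_nhds.mpr fun d => ?_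
  refine Tendsto.congr' ?_ tendsto_const_nhds
  refine eventuallyEq_of_mem (Ici_mem_atTop (d () + 1)) fun N hN => ?_
  have hN' : d () < N := hN
  refine (coeff_eq_apply f d).trans (Eq.trans ?_ (coeff_eq_apply _ d).symm)
  rw [coeff_aeval_X, coeff_trunc, if_pos hN']

/-- Two continuous algebra endomorphisms of `k[[X]]` agreeing at `X` are equal. -/
lemma algHom_unique {F G : PowerSeries k →ₐ[k] PowerSeries k}
    (hF : Continuous F) (hG : Continuous G) (h : F X = G X) : F = G := by
  haveI : T2Space (PowerSeries k) := t2
  apply AlgHom.ext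
  intro f
  have hP : ∀ P : Polynomial k, F (Polynomial.aeval (X : PowerSeries k) P)
      = G (Polynomial.aeval (X : PowerSeries k) P) := by
    intro P
    have h1 : F.comp (Polynomial.aeval (X : PowerSeries k)) =
        G.comp (Polynomial.aeval (X : PowerSeries k)) := by
      apply Polynomial.algHom_ext
      simp only [AlgHom.comp_apply, Polynomial.aeval_X, h]
    exact DFunLike.congr_fun h1 P
  have hFt : Tendsto (fun N => F (Polynomial.aeval (X : PowerSeries k) (trunc N f)))
      atTop (nhds (F f)) := (hF.tendsto f).comp (tendsto_aeval_trunc f)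
  have hGt : Tendsto (fun N => G (Polynomial.aeval (X : PowerSeries k) (trunc N f)))
      atTop (nhds (G f)) := (hG.tendsto f).comp (tendsto_aeval_trunc f)
  refine tendsto_nhds_unique (hFt.congr (fun N => hP (trunc N f))) hGt

end Topology

/-! ### The auxiliary series `G`, `V` and combinatorial coefficient identities -/

section Comb

def Bp (n : ℕ) : Prop := ∃ j, 6 * 2 ^ j ≤ n ∧ n < 8 * 2 ^ j
def P2 (n : ℕ) : Prop := ∃ j : ℕ, n = 2 ^ (j + 1)
def P3 (n : ℕ) : Prop := ∃ j : ℕ, n = 3 * 2 ^ j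

omit [Field k] in
lemma Bp_unique {n j j' : ℕ} (h1 : 6 * 2 ^ j ≤ n) (h2 : n < 8 * 2 ^ j)
    (h1' : 6 * 2 ^ j' ≤ n) (h2' : n < 8 * 2 ^ j') : j = j' := by
  rcases Nat.lt_trichotomy j j' with h | h | h
  · have hp : 2 ^ (j + 1) ≤ 2 ^ j' := Nat.pow_le_pow_right (by norm_num) h
    rw [pow_succ] at hp; omega
  · exact h
  · have hp : 2 ^ (j' + 1) ≤ 2 ^ j := Nat.pow_le_pow_right (by norm_num) h
    rw [pow_succ] at hp; omega

variable (k)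

def Gs : PowerSeries k := PowerSeries.mk fun n => if P2 n ∨ P3 n then (1 : k) else 0
def Vs : PowerSeries k := PowerSeries.mk fun n => if Even n then (1 : k) else 0

variable {k}

lemma coeff_phiTail (n : ℕ) :
    coeff n (phiTail k) = if Even n ∧ Bp n then 1 else 0 := by
  rw [phiTail, coeff_mk]
  by_cases h : Even n ∧ Bp n
  · obtain ⟨⟨m, hm⟩, j0, hj1, hj2⟩ := h
    rw [if_pos ⟨⟨m, hm⟩, j0, hj1, hj2⟩]
    have hpj : 0 < 2 ^ j0 := Nat.pow_pos (by norm_num)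
    have hj0n : j0 < n + 1 := by
      have := Nat.lt_two_pow_self (n := j0)
      omega
    have hl0lt : (n - 6 * 2 ^ j0) / 2 < 2 ^ j0 := by omega
    rw [Finset.sum_eq_single j0]
    · rw [Finset.sum_eq_single ((n - 6 * 2 ^ j0) / 2)]
      · rw [if_pos (by omega)]
      · intro l hl hne
        rw [if_neg]
        omega
      · intro hmem
        exact absurd (Finset.mem_range.mpr hl0lt) hmem
    · intro j hj hne
      refine Finset.sum_eq_zero fun l hl => ?_
      have hlr := Finset.mem_range.mp hl
      rw [if_neg]
      intro hEq
      exact hne (Bp_unique (by omega) (by omega) hj1 hj2)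
    · intro hmem
      exact absurd (Finset.mem_range.mpr hj0n) hmem
  · rw [if_neg h]
    refine Finset.sum_eq_zero fun j hj => Finset.sum_eq_zero fun l hl => ?_
    have hlr := Finset.mem_range.mp hl
    rw [if_neg]
    intro hEq
    exact h ⟨⟨3 * 2 ^ j + l, by omega⟩, j, by omega, by omega⟩

omit [Field k] in
lemma P2_cases {n : ℕ} (h : P2 n) : n = 2 ∨ n = 4 ∨ ∃ j, n = 8 * 2 ^ j := by
  obtain ⟨j, hj⟩ := h
  match j with
  | 0 => left; simpa using hj
  | 1 => right; left; simpa using hj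
  | (j + 2) =>
    right; right
    exact ⟨j, by rw [hj, pow_succ, pow_succ, pow_succ]; ring⟩

omit [Field k] in
lemma P3_cases {n : ℕ} (h : P3 n) : n = 3 ∨ n = 6 ∨ ∃ j, n = 12 * 2 ^ j := by
  obtain ⟨j, hj⟩ := h
  match j with
  | 0 => left; simpa using hj
  | 1 => right; left; simpa using hj
  | (j + 2) =>
    right; right
    exact ⟨j, by rw [hj, pow_succ, pow_succ]; ring⟩

omit [Field k] in
lemma P2_8 {j : ℕ} : P2 (8 * 2 ^ j) := ⟨j + 2, by rw [pow_succ, pow_succ, pow_succ]; ring⟩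

omit [Field k] in
lemma P3_6 {j : ℕ} : P3 (6 * 2 ^ j) := ⟨j + 1, by rw [pow_succ]; ring⟩

omit [Field k] in
lemma Bp_lt8 {n : ℕ} (hn : n < 8) : Bp n ↔ n = 6 ∨ n = 7 := by
  constructor
  · rintro ⟨j, h1, h2⟩
    match j with
    | 0 => simp only [pow_zero, mul_one] at h1 h2; omega
    | (j + 1) =>
      have : 2 ^ 1 ≤ 2 ^ (j + 1) := Nat.pow_le_pow_right (by norm_num) (by omega)
      rw [pow_one] at this
      omega
  · rintro (rfl | rfl) <;> exact ⟨0, by norm_num⟩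

omit [Field k] in
lemma P23_lt8 {n : ℕ} (hn : n < 8) : (P2 n ∨ P3 n) ↔ n = 2 ∨ n = 3 ∨ n = 4 ∨ n = 6 := by
  constructor
  · rintro (h | h)
    · rcases P2_cases h with rfl | rfl | ⟨j, rfl⟩
      · tauto
      · tauto
      · have : 1 ≤ 2 ^ j := Nat.one_le_two_pow
        omega
    · rcases P3_cases h with rfl | rfl | ⟨j, rfl⟩
      · tauto
      · tauto
      · have : 1 ≤ 2 ^ j := Nat.one_le_two_pow
        omega
  · rintro (rfl | rfl | rfl | rfl)
    · exact Or.inl ⟨0, by norm_num⟩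
    · exact Or.inr ⟨0, by norm_num⟩
    · exact Or.inl ⟨1, by norm_num⟩
    · exact Or.inr ⟨1, by norm_num⟩

end Comb

/-! ### Char 2 squares and the key identities -/

section Char2

variable [CharP k 2]

lemma coeff_sq_even (f : PowerSeries k) (m : ℕ) :
    coeff (2 * m) (f * f) = coeff m f * coeff m f := by
  rw [PowerSeries.coeff_mul]
  have hmem : ((m, m) : ℕ × ℕ) ∈ Finset.HasAntidiagonal.antidiagonal (2 * m) := by
    rw [Finset.HasAntidiagonal.mem_antidiagonal]; omega
  rw [← Finset.add_sum_erase _ _ hmem]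
  have hz : ∑ p ∈ (Finset.HasAntidiagonal.antidiagonal (2 * m)).erase (m, m),
      coeff p.1 f * coeff p.2 f = 0 := by
    apply Finset.sum_involution (fun p _ => (p.2, p.1))
    · intro p _
      rw [mul_comm]
      exact CharTwo.add_self_eq_zero _
    · intro p hp _
      simp only [Finset.mem_erase, Finset.HasAntidiagonal.mem_antidiagonal] at hp
      intro hEq
      have h1 : p.2 = p.1 := congrArg Prod.fst hEq
      exact hp.1 (Prod.ext (by omega) (by omega))
    · intro p hp
      simp only [Finset.mem_erase, Finset.HasAntidiagonal.mem_antidiagonal] at hp ⊢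
      refine ⟨fun hEq => ?_, by omega⟩
      have h1 : p.2 = m := congrArg Prod.fst hEq
      exact hp.1 (Prod.ext (by omega) (by omega))
    · intro p _
      rfl
  rw [hz, add_zero]

lemma coeff_sq_odd (f : PowerSeries k) {n : ℕ} (hn : ¬ Even n) :
    coeff n (f * f) = 0 := by
  rw [PowerSeries.coeff_mul]
  apply Finset.sum_involution (fun p _ => (p.2, p.1))
  · intro p _
    rw [mul_comm]
    exact CharTwo.add_self_eq_zero _
  · intro p hp _
    rw [Finset.HasAntidiagonal.mem_antidiagonal] at hp
    intro hEq
    have h1 : p.2 = p.1 := congrArg Prod.fst hEq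
    exact hn ⟨p.1, by omega⟩
  · intro p hp
    rw [Finset.HasAntidiagonal.mem_antidiagonal] at hp ⊢
    omega
  · intro p _
    rfl

lemma ite_sq (c : Prop) [Decidable c] : (if c then (1 : k) else 0) * (if c then 1 else 0)
    = if c then 1 else 0 := by
  split <;> simp

lemma hVs : (1 + X ^ 2 : PowerSeries k) * Vs k = 1 := by
  have h1 : (1 : k) + 1 = 0 := CharTwo.add_self_eq_zero 1
  have h : (1 + X ^ 2 : PowerSeries k) * Vs k = Vs k + Vs k * X ^ 2 := by ring
  rw [h]
  ext n
  rw [map_add, coeff_mul_X_pow', coeff_one]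
  simp only [Vs, coeff_mk, Nat.even_iff]
  rcases n with _ | _ | n
  · norm_num
  · norm_num
  · rw [if_pos (by omega : 2 ≤ n + 2), if_neg (by omega : ¬ n + 2 = 0)]
    by_cases he : n % 2 = 0
    · rw [if_pos (by omega : (n + 2) % 2 = 0), if_pos (by omega : (n + 2 - 2) % 2 = 0)]
      exact h1
    · rw [if_neg (by omega : ¬ (n + 2) % 2 = 0), if_neg (by omega : ¬ (n + 2 - 2) % 2 = 0),
        add_zero]

lemma coeff_Gs (n : ℕ) : coeff n (Gs k) = if P2 n ∨ P3 n then (1 : k) else 0 := by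
  rw [Gs, coeff_mk]

lemma hGsq : Gs k * Gs k = Gs k + X ^ 2 + X ^ 3 := by
  have h1 : (1 : k) + 1 = 0 := CharTwo.add_self_eq_zero 1
  ext n
  rw [map_add, map_add, coeff_X_pow, coeff_X_pow]
  rcases Nat.even_or_odd n with ⟨m, hm⟩ | hodd
  · rw [show n = 2 * m by omega, coeff_sq_even, coeff_Gs, coeff_Gs, ite_sq]
    by_cases hm1 : m = 1
    · subst hm1
      have hnot : ¬ (P2 1 ∨ P3 1) := by
        rintro (⟨j, hj⟩ | ⟨j, hj⟩) <;>
          (have : 1 ≤ 2 ^ j := Nat.one_le_two_pow) <;>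
          (try rw [pow_succ] at hj) <;> omega
      rw [if_neg hnot, if_pos (Or.inl ⟨0, by norm_num⟩ : P2 (2 * 1) ∨ P3 (2 * 1)),
        if_pos (by norm_num : 2 * 1 = 2), if_neg (by norm_num : ¬ 2 * 1 = 3), add_zero]
      exact h1.symm
    · have hiff : (P2 (2 * m) ∨ P3 (2 * m)) ↔ (P2 m ∨ P3 m) := by
        constructor
        · rintro (⟨j, hj⟩ | ⟨j, hj⟩)
          · match j with
            | 0 => norm_num at hj; omega
            | (j + 1) =>
              left
              exact ⟨j, by rw [pow_succ] at hj; omega⟩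
          · match j with
            | 0 => norm_num at hj; omega
            | (j + 1) =>
              right
              exact ⟨j, by rw [pow_succ] at hj; omega⟩
        · rintro (⟨j, hj⟩ | ⟨j, hj⟩)
          · exact Or.inl ⟨j + 1, by rw [pow_succ]; omega⟩
          · exact Or.inr ⟨j + 1, by rw [pow_succ]; omega⟩
      rw [if_neg (by omega : ¬ 2 * m = 2), if_neg (by omega : ¬ 2 * m = 3), add_zero, add_zero]
      by_cases h : P2 m ∨ P3 m
      · rw [if_pos h, if_pos (hiff.mpr h)]
      · rw [if_neg h, if_neg (fun hh => h (hiff.mp hh))]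
  · have hodd' := Nat.odd_iff.mp hodd
    rw [coeff_sq_odd _ (by rw [Nat.even_iff]; omega), coeff_Gs]
    have hP2 : ¬ P2 n := by
      rintro ⟨j, hj⟩
      rw [pow_succ] at hj
      omega
    by_cases h3 : n = 3
    · subst h3
      rw [if_pos (Or.inr ⟨0, by norm_num⟩ : P2 3 ∨ P3 3), if_neg (by omega : ¬ (3 : ℕ) = 2),
        if_pos rfl, add_zero]
      exact h1.symm
    · have hP3 : ¬ P3 n := by
        intro h
        rcases P3_cases h with h' | h' | ⟨j, h'⟩
        · exact h3 h'
        · omega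
        · have : 1 ≤ 2 ^ j := Nat.one_le_two_pow
          omega
      rw [if_neg (fun h => h.elim hP2 hP3), if_neg (by omega : ¬ n = 2), if_neg h3]
      norm_num

end Char2

section KeyIdentity

omit [Field k] in
lemma W1 {n : ℕ} (hn : 8 ≤ n) (hb : Bp n) (hb' : Bp (n - 2)) : ¬ P2 n ∧ ¬ P3 n := by
  obtain ⟨j, hj1, hj2⟩ := hb
  obtain ⟨j', hj1', hj2'⟩ := hb'
  have hone : 1 ≤ 2 ^ j' := Nat.one_le_two_pow
  have hone2 : 1 ≤ 2 ^ j := Nat.one_le_two_pow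
  have hjj : j' = j := by
    rcases Nat.lt_trichotomy j' j with h | h | h
    · have hp : 2 ^ (j' + 1) ≤ 2 ^ j := Nat.pow_le_pow_right (by norm_num) h
      rw [pow_succ] at hp
      omega
    · exact h
    · have hp : 2 ^ (j + 1) ≤ 2 ^ j' := Nat.pow_le_pow_right (by norm_num) h
      rw [pow_succ] at hp
      omega
  subst hjj
  constructor
  · intro h
    rcases P2_cases h with h' | h' | ⟨i, h'⟩
    · omega
    · omega
    · rcases le_or_gt j' i with h'' | h''
      · have hp : 2 ^ j' ≤ 2 ^ i := Nat.pow_le_pow_right (by norm_num) h''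
        omega
      · have hp : 2 ^ (i + 1) ≤ 2 ^ j' := Nat.pow_le_pow_right (by norm_num) h''
        rw [pow_succ] at hp
        omega
  · intro h
    rcases P3_cases h with h' | h' | ⟨i, h'⟩
    · omega
    · omega
    · have hps : (2 : ℕ) ^ (i + 1) = 2 ^ i * 2 := pow_succ 2 i
      have hj : i + 1 = j' := by
        refine Bp_unique (n := n) (by omega) (by omega) hj1 hj2
      subst hj
      omega

omit [Field k] in
lemma W2 {n : ℕ} (hn : 8 ≤ n) (he : n % 2 = 0) (hb : Bp n) (hb' : ¬ Bp (n - 2)) : P3 n := by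
  obtain ⟨j, hj1, hj2⟩ := hb
  have hstart : n = 6 * 2 ^ j := by
    by_contra hne
    exact hb' ⟨j, by omega, by omega⟩
  exact ⟨j + 1, by rw [pow_succ]; omega⟩

omit [Field k] in
lemma W3 {n : ℕ} (hn : 8 ≤ n) (he : n % 2 = 0) (hb : ¬ Bp n) (hb' : Bp (n - 2)) : P2 n := by
  obtain ⟨j, hj1, hj2⟩ := hb'
  have h8 : n = 8 * 2 ^ j := by
    by_contra hne
    exact hb ⟨j, by omega, by omega⟩
  exact h8 ▸ P2_8

omit [Field k] in
lemma W4 {n : ℕ} (hn : 8 ≤ n) (he : n % 2 = 0) (hb : ¬ Bp n) (hb' : ¬ Bp (n - 2)) :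
    ¬ (P2 n ∨ P3 n) := by
  rintro (h | h)
  · rcases P2_cases h with h' | h' | ⟨i, h'⟩
    · omega
    · omega
    · have hone : 1 ≤ 2 ^ i := Nat.one_le_two_pow
      exact hb' ⟨i, by omega, by omega⟩
  · rcases P3_cases h with h' | h' | ⟨i, h'⟩
    · omega
    · omega
    · have hone : 1 ≤ 2 ^ i := Nat.one_le_two_pow
      exact hb ⟨i + 1, by rw [pow_succ]; omega, by rw [pow_succ]; omega⟩

variable [CharP k 2]

lemma coeff_phiSeries (m : ℕ) : coeff m (phiSeries k) =
    (if m = 1 then 1 else 0) + (if m = 2 then 1 else 0)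
      + (if Even m ∧ Bp m then (1 : k) else 0) := by
  rw [phiSeries, map_add, map_add, coeff_phiTail, PowerSeries.coeff_X, coeff_X_pow]

lemma hphiw : phiSeries k * (1 + X ^ 2) = X + Gs k := by
  have h1 : (1 : k) + 1 = 0 := CharTwo.add_self_eq_zero 1
  rw [show phiSeries k * (1 + X ^ 2) = phiSeries k + phiSeries k * X ^ 2 from by ring]
  ext n
  rw [map_add, map_add, coeff_mul_X_pow', PowerSeries.coeff_X, coeff_Gs,
    coeff_phiSeries, coeff_phiSeries]
  by_cases h8 : n < 8
  · have hb1 : (Even n ∧ Bp n) ↔ n = 6 := by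
      constructor
      · rintro ⟨he, hb⟩
        rcases (Bp_lt8 h8).mp hb with rfl | rfl
        · rfl
        · rw [Nat.even_iff] at he; omega
      · rintro rfl
        exact ⟨⟨3, rfl⟩, (Bp_lt8 h8).mpr (Or.inl rfl)⟩
    have hb2 : ¬ (Even (n - 2) ∧ Bp (n - 2)) := by
      rintro ⟨he, j, hj1, hj2⟩
      have : 1 ≤ 2 ^ j := Nat.one_le_two_pow
      omega
    rw [if_neg hb2]
    simp only [hb1, P23_lt8 h8]
    split_ifs <;> first | rfl | omega | norm_num
  · push_neg at h8
    rw [if_pos (by omega : 2 ≤ n), if_neg (by omega : ¬ n = 1), if_neg (by omega : ¬ n = 2),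
      if_neg (by omega : ¬ n - 2 = 1), if_neg (by omega : ¬ n - 2 = 2)]
    rcases Nat.even_or_odd n with he | ho
    · have he' := Nat.even_iff.mp he
      have he2 : Even (n - 2) := by rw [Nat.even_iff]; omega
      by_cases hb : Bp n <;> by_cases hb' : Bp (n - 2)
      · obtain ⟨hp2, hp3⟩ := W1 h8 hb hb'
        rw [if_pos ⟨he, hb⟩, if_pos ⟨he2, hb'⟩, if_neg (fun h => h.elim hp2 hp3)]
        linear_combination h1
      · rw [if_pos ⟨he, hb⟩, if_neg (fun hh => hb' hh.2),
          if_pos (Or.inr (W2 h8 he' hb hb') : P2 n ∨ P3 n)]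
        norm_num
      · rw [if_neg (fun hh => hb hh.2), if_pos ⟨he2, hb'⟩,
          if_pos (Or.inl (W3 h8 he' hb hb') : P2 n ∨ P3 n)]
        norm_num
      · rw [if_neg (fun hh => hb hh.2), if_neg (fun hh => hb' hh.2),
          if_neg (W4 h8 he' hb hb')]
        norm_num
    · have ho' := Nat.odd_iff.mp ho
      have hno : ¬ Even n := by rw [Nat.even_iff]; omega
      have hno2 : ¬ Even (n - 2) := by rw [Nat.even_iff]; omega
      have hnp : ¬ (P2 n ∨ P3 n) := by
        rintro (h | h)
        · rcases P2_cases h with h' | h' | ⟨i, h'⟩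
          · omega
          · omega
          · omega
        · rcases P3_cases h with h' | h' | ⟨i, h'⟩
          · omega
          · omega
          · have : 1 ≤ 2 ^ i := Nat.one_le_two_pow
            omega
      rw [if_neg (fun hh => hno hh.1), if_neg (fun hh => hno2 hh.1), if_neg hnp]
      norm_num

end KeyIdentity

/-! ### Algebraic consequences and the main construction -/

section Algebraic

variable [CharP k 2]

lemma two_ps : (2 : PowerSeries k) = 0 := by
  ext n
  rw [show (2 : PowerSeries k) = 1 + 1 from by norm_num, map_add, coeff_one, map_zero]
  split
  · exact CharTwo.add_self_eq_zero 1
  · norm_num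

omit [CharP k 2] in
lemma hwne : (1 + X ^ 2 : PowerSeries k) ≠ 0 := by
  intro h
  have h0 := congrArg (coeff 0) h
  rw [map_add, coeff_one, coeff_X_pow, map_zero] at h0
  norm_num at h0

lemma hrhow : (phiSeries k + X ^ 2 * Vs k) * (1 + X ^ 2) = X + X ^ 2 + Gs k := by
  linear_combination hphiw (k := k) + (X : PowerSeries k) ^ 2 * hVs (k := k)

omit [CharP k 2] in
lemma star_abstract {phi G : PowerSeries k} (h2 : (2 : PowerSeries k) = 0)
    (hG : G * G = G + X ^ 2 + X ^ 3) (hphi : phi * (1 + X ^ 2) = X + G) :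
    phi = X + (1 + X ^ 2) * phi ^ 2 := by
  apply mul_right_cancel₀ (pow_ne_zero 2 (hwne (k := k)))
  linear_combination ((1) + (-1)*phi + (-1)*G + (-1)*(X : PowerSeries k) + (1)*(X : PowerSeries k)^2 + (-2)*(X : PowerSeries k)^2*phi + (-1)*(X : PowerSeries k)^2*G + (-1)*(X : PowerSeries k)^3 + (-1)*(X : PowerSeries k)^4*phi) * hphi + ((-1) + (-1)*(X : PowerSeries k)^2) * hG + ((-1)*(X : PowerSeries k)*G + (-1)*(X : PowerSeries k)^2 + (-1)*(X : PowerSeries k)^3 + (-1)*(X : PowerSeries k)^3*G + (-1)*(X : PowerSeries k)^4 + (-1)*(X : PowerSeries k)^5) * h2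

omit [CharP k 2] in
lemma c4_abstract {rho G : PowerSeries k} (h2 : (2 : PowerSeries k) = 0)
    (hG : G * G = G + X ^ 2 + X ^ 3) (hrho : rho * (1 + X ^ 2) = X + X ^ 2 + G) :
    rho = X + X ^ 2 + (1 + X ^ 2) * rho ^ 2 := by
  apply mul_right_cancel₀ (pow_ne_zero 2 (hwne (k := k)))
  linear_combination ((1) + (-1)*rho + (-1)*G + (-1)*(X : PowerSeries k) + (-2)*(X : PowerSeries k)^2*rho + (-1)*(X : PowerSeries k)^2*G + (-1)*(X : PowerSeries k)^3 + (-1)*(X : PowerSeries k)^4 + (-1)*(X : PowerSeries k)^4*rho) * hrho + ((-1) + (-1)*(X : PowerSeries k)^2) * hG + ((-1)*(X : PowerSeries k)*G + (-1)*(X : PowerSeries k)^2 + (-1)*(X : PowerSeries k)^2*G + (-2)*(X : PowerSeries k)^3 + (-1)*(X : PowerSeries k)^3*G + (-2)*(X : PowerSeries k)^4 + (-1)*(X : PowerSeries k)^4*G + (-2)*(X : PowerSeries k)^5 + (-1)*(X : PowerSeries k)^6) * h2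

omit [CharP k 2] in
lemma c5_abstract {phi rho G : PowerSeries k} (h2 : (2 : PowerSeries k) = 0)
    (hG : G * G = G + X ^ 2 + X ^ 3) (hphi : phi * (1 + X ^ 2) = X + G)
    (hrho : rho * (1 + X ^ 2) = X + X ^ 2 + G) :
    rho = phi + (1 + phi ^ 2) * rho ^ 2 := by
  apply mul_right_cancel₀ (pow_ne_zero 4 (hwne (k := k)))
  linear_combination ((-1) + (-1)*phi*rho^2 + (-1)*G*rho^2 + (-1)*(X : PowerSeries k)*rho^2 + (-3)*(X : PowerSeries k)^2 + (-3)*(X : PowerSeries k)^2*phi*rho^2 + (-2)*(X : PowerSeries k)^2*G*rho^2 + (-2)*(X : PowerSeries k)^3*rho^2 + (-3)*(X : PowerSeries k)^4 + (-3)*(X : PowerSeries k)^4*phi*rho^2 + (-1)*(X : PowerSeries k)^4*G*rho^2 + (-1)*(X : PowerSeries k)^5*rho^2 + (-1)*(X : PowerSeries k)^6 + (-1)*(X : PowerSeries k)^6*phi*rho^2) * hphi + ((1) + (-1)*rho + (-1)*G + (-1)*G^2*rho + (-1)*G^3 + (-1)*(X : PowerSeries k) + (-2)*(X : PowerSeries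 k)*G*rho + (-3)*(X : PowerSeries k)*G^2 + (2)*(X : PowerSeries k)^2 + (-4)*(X : PowerSeries k)^2*rho + (-5)*(X : PowerSeries k)^2*G + (-1)*(X : PowerSeries k)^2*G^2 + (-1)*(X : PowerSeries k)^2*G^2*rho + (-3)*(X : PowerSeries k)^3 + (-2)*(X : PowerSeries k)^3*G + (-2)*(X : PowerSeries k)^3*G*rho + (-4)*(X : PowerSeries k)^4*rho + (-1)*(X : PowerSeries k)^4*G + (-1)*(X : PowerSeries k)^5 + (-1)*(X : PowerSeries k)^6*rho) * hrho + ((-2) + (-1)*G + (-1)*G^2 + (-4)*(X : PowerSeries k) + (-4)*(X : PowerSeries k)*G + (-11)*(X : PowerSeries k)^2 + (-2)*(X : PowerSeries k)^2*G + (-7)*(X : PowerSeries k)^3 + (-2)*(X : PowerSeries k)^4) * hG + ((-1)*G + (-3)*(X : PowerSeries k)*G + (-1)*(X : PowerSeries k)^2 + (-7)*(X : PowerSeries k)^2*G + (-4)*(X : PowerSeries k)^3 + (-10)*(X : PowerSeries k)^3*G + (-8)*(X : PowerSeries k)^4 + (-9)*(X : PowerSeries k)^4*G + (-12)*(X : PowerSeries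 k)^5 + (-3)*(X : PowerSeries k)^5*G + (-5)*(X : PowerSeries k)^6 + (-1)*(X : PowerSeries k)^6*G + (-2)*(X : PowerSeries k)^7) * h2

omit [CharP k 2] in
lemma xeq_abstract {rho G : PowerSeries k} (h2 : (2 : PowerSeries k) = 0)
    (hG : G * G = G + X ^ 2 + X ^ 3) (hrho : rho * (1 + X ^ 2) = X + X ^ 2 + G) :
    (X : PowerSeries k) = (rho + rho ^ 2) + (1 + rho ^ 2) * X ^ 2 := by
  apply mul_right_cancel₀ (pow_ne_zero 2 (hwne (k := k)))
  linear_combination ((-1) + (-1)*rho + (-1)*G + (-1)*(X : PowerSeries k) + (-2)*(X : PowerSeries k)^2 + (-2)*(X : PowerSeries k)^2*rho + (-1)*(X : PowerSeries k)^2*G + (-1)*(X : PowerSeries k)^3 + (-1)*(X : PowerSeries k)^4 + (-1)*(X : PowerSeries k)^4*rho) * hrho + ((-1) + (-1)*(X : PowerSeries k)^2) * hG + ((-1)*G + (-1)*(X : PowerSeries k)*G + (-2)*(X : PowerSeries k)^2 + (-2)*(X : PowerSeries k)^2*G + (-1)*(X : PowerSeries k)^3 + (-1)*(X : PowerSeries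 k)^3*G + (-3)*(X : PowerSeries k)^4 + (-1)*(X : PowerSeries k)^4*G + (-1)*(X : PowerSeries k)^5 + (-1)*(X : PowerSeries k)^6) * h2

/-- Uniqueness of solutions `Y = a + c·Y²` with zero constant term. -/
lemma sq_eq_unique {a c Y Z : PowerSeries k} (hY : Y = a + c * Y ^ 2) (hZ : Z = a + c * Z ^ 2)
    (hY0 : constantCoeff Y = 0) (hZ0 : constantCoeff Z = 0) : Y = Z := by
  by_contra hne
  have hd : Y - Z = c * ((Y + Z) * (Y - Z)) := by linear_combination hY - hZ
  have hdne : Y - Z ≠ 0 := sub_ne_zero.mpr hne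
  have h1 : (1 : ℕ∞) ≤ (Y + Z).order := by
    have := PowerSeries.nat_le_order (Y + Z) 1 (fun i hi => by
      interval_cases i
      rw [coeff_zero_eq_constantCoeff_apply, map_add, hY0, hZ0, add_zero])
    simpa using this
  have horder : (Y - Z).order = c.order + ((Y + Z).order + (Y - Z).order) := by
    conv_lhs => rw [hd]
    rw [PowerSeries.order_mul, PowerSeries.order_mul]
  have hfin : (Y - Z).order ≠ ⊤ := fun h => hdne (PowerSeries.order_eq_top.mp h)
  have hge : (Y - Z).order + 1 ≤ (Y - Z).order := by
    calc (Y - Z).order + 1 = 1 + (Y - Z).order := by rw [add_comm]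
      _ ≤ (Y + Z).order + (Y - Z).order := add_le_add_left h1 _
      _ ≤ c.order + ((Y + Z).order + (Y - Z).order) := le_add_self
      _ = (Y - Z).order := horder.symm
  exact lt_irrefl _ ((ENat.add_one_le_iff hfin).mp hge)

theorem main (k : Type*) [Field k] [CharP k 2] :
    (∃ σ : PowerSeries k ≃ₐ[k] PowerSeries k,
        Continuous σ ∧ Continuous σ.symm ∧ σ (X : PowerSeries k) = phiSeries k) ∧
      PowerSeries.coeff 0 (phiSeries k) = 0 ∧ PowerSeries.coeff 1 (phiSeries k) = 1 ∧
      ∀ σ : PowerSeries k ≃ₐ[k] PowerSeries k,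
        Continuous σ → σ (X : PowerSeries k) = phiSeries k → σ ^ 4 = 1 ∧ σ ^ 2 ≠ 1 := by
  classical
  have h2 : (2 : PowerSeries k) = 0 := two_ps
  have hG := hGsq (k := k)
  have hphi := hphiw (k := k)
  have hc0 : coeff 0 (phiSeries k) = 0 := by
    rw [coeff_phiSeries]
    have hB : ¬ Bp 0 := by
      rintro ⟨j, hj1, hj2⟩
      have : 1 ≤ 2 ^ j := Nat.one_le_two_pow
      omega
    rw [if_neg (by omega : ¬ (0 : ℕ) = 1), if_neg (by omega : ¬ (0 : ℕ) = 2),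
      if_neg (fun h => hB h.2)]
    norm_num
  have hc1 : coeff 1 (phiSeries k) = 1 := by
    rw [coeff_phiSeries]
    have hE : ¬ Even 1 := by rw [Nat.even_iff]; omega
    rw [if_pos rfl, if_neg (by omega : ¬ (1 : ℕ) = 2), if_neg (fun h => hE h.1)]
    norm_num
  have hφ0 : constantCoeff (phiSeries k) = 0 := by
    rw [← coeff_zero_eq_constantCoeff_apply]
    exact hc0
  set ρ : PowerSeries k := phiSeries k + X ^ 2 * Vs k with hρdef
  have hρw : ρ * (1 + X ^ 2) = X + X ^ 2 + Gs k := hrhow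
  have hρ0 : constantCoeff ρ = 0 := by
    rw [hρdef, map_add, hφ0, map_mul, map_pow, constantCoeff_X]
    ring
  have hstar := star_abstract h2 hG hphi
  have hC4 := c4_abstract h2 hG hρw
  have hC5 := c5_abstract h2 hG hphi hρw
  have hXeq := xeq_abstract h2 hG hρw
  set S : PowerSeries k →ₐ[k] PowerSeries k := subHom hφ0 with hSdef
  set T : PowerSeries k →ₐ[k] PowerSeries k := subHom hρ0 with hTdef
  have hSX : S X = phiSeries k := sub_X hφ0
  have hTX : T X = ρ := sub_X hρ0
  have hScont : Continuous S := continuous_sub _ hφ0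
  have hTcont : Continuous T := continuous_sub _ hρ0
  have hψ2 : S (phiSeries k) = ρ := by
    refine sq_eq_unique (a := phiSeries k) (c := 1 + phiSeries k ^ 2) ?_ hC5 ?_ hρ0
    · calc S (phiSeries k) = S (X + (1 + X ^ 2) * phiSeries k ^ 2) := by rw [← hstar]
        _ = phiSeries k + (1 + phiSeries k ^ 2) * (S (phiSeries k)) ^ 2 := by
          simp only [map_add, map_mul, map_one, map_pow, hSX]
    · exact constantCoeff_sub hφ0 hφ0
  have hSS : S.comp S = T := by
    refine algHom_unique ?_ hTcont ?_
    · exact hScont.comp hScont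
    · rw [AlgHom.comp_apply, hSX, hψ2, hTX]
  have hTρ : T ρ = X := by
    refine sq_eq_unique (a := ρ + ρ ^ 2) (c := 1 + ρ ^ 2) ?_ hXeq ?_ ?_
    · calc T ρ = T (X + X ^ 2 + (1 + X ^ 2) * ρ ^ 2) := by rw [← hC4]
        _ = (ρ + ρ ^ 2) + (1 + ρ ^ 2) * (T ρ) ^ 2 := by
          simp only [map_add, map_mul, map_one, map_pow, hTX]
    · exact constantCoeff_sub hρ0 hρ0
    · rw [constantCoeff_X]
  have hS4 : S.comp (S.comp (S.comp S)) = AlgHom.id k (PowerSeries k) := by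
    refine algHom_unique ?_ continuous_id ?_
    · exact hScont.comp (hScont.comp (hScont.comp hScont))
    · rw [AlgHom.comp_apply, AlgHom.comp_apply, AlgHom.comp_apply, hSX, hψ2, AlgHom.id_apply]
      calc S (S ρ) = (S.comp S) ρ := (AlgHom.comp_apply S S ρ).symm
        _ = T ρ := by rw [hSS]
        _ = X := hTρ
  have hS4' : ∀ f, S (S (S (S f))) = f := by
    intro f
    have := DFunLike.congr_fun hS4 f
    simpa only [AlgHom.comp_apply, AlgHom.id_apply] using this
  refine ⟨?_, hc0, hc1, ?_⟩
  · refine ⟨AlgEquiv.ofAlgHom S (S.comp (S.comp S)) hS4 ?_, ?_, ?_, ?_⟩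
    · rw [AlgHom.comp_assoc, AlgHom.comp_assoc]
      exact hS4
    · exact hScont
    · exact hScont.comp (hScont.comp hScont)
    · exact hSX
  · intro σ' hcont hX'
    have hσ'S : (σ' : PowerSeries k →ₐ[k] PowerSeries k) = S := by
      refine algHom_unique ?_ hScont ?_
      · exact hcont
      · rw [← hSX] at hX'
        exact hX'
    have happ : ∀ f, σ' f = S f := fun f => DFunLike.congr_fun hσ'S f
    constructor
    · apply AlgEquiv.ext
      intro f
      have hpow : σ' ^ 4 = ((σ' * σ') * σ') * σ' := by
        rw [pow_succ, pow_succ, pow_succ, pow_one]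
      rw [hpow, AlgEquiv.mul_apply, AlgEquiv.mul_apply, AlgEquiv.mul_apply,
        happ, happ, happ, happ, hS4' f, AlgEquiv.one_apply]
    · intro hOne
      have h2app : (σ' ^ 2) X = X := by rw [hOne, AlgEquiv.one_apply]
      have hsq : σ' ^ 2 = σ' * σ' := by rw [pow_succ, pow_one]
      rw [hsq, AlgEquiv.mul_apply, happ, happ, hSX, hψ2] at h2app
      -- h2app : ρ = X
      have hX4 : (X : PowerSeries k) ^ 4 = 0 := by
        have hC4' := hC4
        rw [h2app] at hC4'
        linear_combination (-1 : PowerSeries k) * hC4' + (-(X : PowerSeries k) ^ 2) * h2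
      have hco : coeff 4 ((X : PowerSeries k) ^ 4) = 0 := by rw [hX4, map_zero]
      rw [coeff_X_pow, if_pos rfl] at hco
      exact one_ne_zero hco

end Algebraic

end NottinghamProof

/-- for `k` of characteristic 2 there is a continuous `k`-algebra automorphism
`σ` of `k[[t]]` with `σ(t) = φ(t)`; moreover `φ(t) ≡ t mod t²` (so any such `σ` lies in the
Nottingham group) and every such `σ` has order exactly 4: `σ⁴ = 1` and `σ² ≠ 1`. -/
theorem nottingham_order_four [CharP k 2] :
    letI := psTop k
    (∃ σ : PowerSeries k ≃ₐ[k] PowerSeries k,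
        Continuous σ ∧ Continuous σ.symm ∧ σ (X : PowerSeries k) = phiSeries k) ∧
      PowerSeries.coeff 0 (phiSeries k) = 0 ∧ PowerSeries.coeff 1 (phiSeries k) = 1 ∧
      ∀ σ : PowerSeries k ≃ₐ[k] PowerSeries k,
        Continuous σ → σ (X : PowerSeries k) = phiSeries k → σ ^ 4 = 1 ∧ σ ^ 2 ≠ 1 := by
  exact NottinghamProof.main k
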